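/- Let (λᵢ)_{i≥1} satisfy c·i^{-β} ≤ λᵢ ≤ C·i^{-β} with β > 1, and fix s with 0 < s < 2. Then for λ ∈ (0,1], the sum ∑_{i=1}^∞ (λ/(λᵢ+λ))² · λᵢ^{s} · i^{-1} is bounded above and below by constant multiples of λ^{s} (constants depending only on c, C, β, s). -/

import Mathlib

open Real Finset

lemma core_low (x q : ℝ) (hx : 1 ≤ x) (hq : 0 < q) :
    q / (x + 1) + 1 ≤ (1 + 1/x) ^ q := by
  have hx0 : 0 < x := lt_of_lt_of_le one_pos hx
  have hpos : (0:ℝ) < 1 + 1/x := by positivity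
  have hlog : 1/(x+1) ≤ Real.log (1 + 1/x) := by
    have h1 : Real.log (x/(x+1)) ≤ x/(x+1) - 1 :=
      Real.log_le_sub_one_of_pos (by positivity)
    have h2 : Real.log (x/(x+1)) = - Real.log (1 + 1/x) := by
      rw [show (1 + 1/x : ℝ) = (x+1)/x by field_simp, ← Real.log_inv]
      congr 1
      field_simp
    have h3 : x/(x+1) - 1 = -(1/(x+1)) := by field_simp; ring
    rw [h2, h3] at h1
    linarith
  calc q / (x+1) + 1 ≤ q * Real.log (1 + 1/x) + 1 := by
        have := mul_le_mul_of_nonneg_left hlog (le_of_lt hq)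
        rw [mul_one_div] at this; linarith
    _ ≤ Real.exp (q * Real.log (1 + 1/x)) := Real.add_one_le_exp _
    _ = (1 + 1/x) ^ q := by rw [Real.rpow_def_of_pos hpos, mul_comm]

lemma core_high (x q : ℝ) (hx : 1 ≤ x) (hq : 0 < q) :
    (1 + 1/x) ^ q ≤ 1 + q * Real.exp q / x := by
  have hx0 : 0 < x := lt_of_lt_of_le one_pos hx
  have hpos : (0:ℝ) < 1 + 1/x := by positivity
  have hlog : Real.log (1 + 1/x) ≤ 1/x := by
    have := Real.log_le_sub_one_of_pos hpos
    linarith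
  have hqx : q * Real.log (1 + 1/x) ≤ q / x := by
    have := mul_le_mul_of_nonneg_left hlog (le_of_lt hq)
    rw [mul_one_div] at this; linarith
  have hey : ∀ y : ℝ, 0 ≤ y → Real.exp y ≤ 1 + y * Real.exp y := by
    intro y hy
    have h := Real.add_one_le_exp (-y)
    have he : 0 < Real.exp y := Real.exp_pos y
    have h2 : (-y+1) * Real.exp y ≤ 1 := by
      rw [Real.exp_neg] at h
      calc (-y+1)*Real.exp y ≤ (Real.exp y)⁻¹ * Real.exp y :=
            mul_le_mul_of_nonneg_right h he.le
        _ = 1 := inv_mul_cancel₀ he.ne'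
    nlinarith [h2]
  calc (1 + 1/x) ^ q = Real.exp (q * Real.log (1 + 1/x)) := by
        rw [Real.rpow_def_of_pos hpos, mul_comm]
    _ ≤ Real.exp (q / x) := Real.exp_le_exp.2 hqx
    _ ≤ 1 + (q/x) * Real.exp (q/x) := hey _ (by positivity)
    _ ≤ 1 + q * Real.exp q / x := by
        have h1 : Real.exp (q/x) ≤ Real.exp q := by
          apply Real.exp_le_exp.2
          rw [div_le_iff₀ hx0]; nlinarith
        have : (q/x) * Real.exp (q/x) ≤ (q/x) * Real.exp q :=
          mul_le_mul_of_nonneg_left h1 (by positivity)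
        calc 1 + (q/x) * Real.exp (q/x) ≤ 1 + (q/x) * Real.exp q := by linarith
          _ = 1 + q * Real.exp q / x := by ring

lemma inc_split (x q : ℝ) (hx : 1 ≤ x) :
    (x + 1) ^ q = x ^ q * (1 + 1/x) ^ q := by
  have hx0 : 0 < x := lt_of_lt_of_le one_pos hx
  rw [← Real.mul_rpow hx0.le (by positivity)]
  congr 1
  field_simp

lemma inc_low (x q : ℝ) (hx : 1 ≤ x) (hq : 0 < q) :
    (q/2) * x ^ (q-1) ≤ (x+1) ^ q - x ^ q := by
  have hx0 : 0 < x := lt_of_lt_of_le one_pos hx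
  have hxq : 0 < x ^ q := Real.rpow_pos_of_pos hx0 q
  have h := core_low x q hx hq
  have key : x ^ q * (q/(x+1)) ≤ (x+1)^q - x^q := by
    rw [inc_split x q hx]
    nlinarith
  refine le_trans ?_ key
  rw [Real.rpow_sub_one hx0.ne' q]
  calc q/2 * (x^q/x) = (q*x^q)/(2*x) := by ring
    _ ≤ (q*x^q)/(x+1) := by
        apply div_le_div_of_nonneg_left (by positivity) (by positivity)
        linarith
    _ = x^q * (q/(x+1)) := by ring

lemma inc_high (x q : ℝ) (hx : 1 ≤ x) (hq : 0 < q) :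
    (x+1) ^ q - x ^ q ≤ q * Real.exp q * x ^ (q-1) := by
  have hx0 : 0 < x := lt_of_lt_of_le one_pos hx
  have hxq : 0 < x ^ q := Real.rpow_pos_of_pos hx0 q
  have h := core_high x q hx hq
  have key : (x+1)^q - x^q ≤ x^q * (q * Real.exp q / x) := by
    rw [inc_split x q hx]
    nlinarith
  refine key.trans ?_
  rw [Real.rpow_sub_one hx0.ne' q]
  ring_nf
  exact le_refl _


lemma tail_inc (x p : ℝ) (hx : 1 ≤ x) (hp : 0 < p) :
    p * (x+1) ^ (-(p+1)) ≤ x ^ (-p) - (x+1) ^ (-p) := by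
  have hx0 : 0 < x := lt_of_lt_of_le one_pos hx
  have hx1 : (0:ℝ) < x + 1 := by linarith
  have h1 : x ^ p ≠ 0 := (Real.rpow_pos_of_pos hx0 p).ne'
  have h2 : (x+1) ^ p ≠ 0 := (Real.rpow_pos_of_pos hx1 p).ne'
  have hid : x ^ (-p) = (x+1) ^ (-p) * (1 + 1/x) ^ p := by
    rw [show (1+1/x:ℝ) = (x+1)/x by field_simp, Real.div_rpow hx1.le hx0.le,
        Real.rpow_neg hx1.le, Real.rpow_neg hx0.le]
    field_simp
  have hcore := core_low x p hx hp
  have hq : (0:ℝ) < (x+1)^(-p) := Real.rpow_pos_of_pos hx1 _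
  calc p * (x+1)^(-(p+1)) = (x+1)^(-p) * (p/(x+1)) := by
        rw [show -(p+1) = -p + (-1) by ring, Real.rpow_add hx1, Real.rpow_neg_one]
        field_simp
    _ ≤ (x+1)^(-p) * ((1+1/x)^p - 1) :=
        mul_le_mul_of_nonneg_left (by linarith) hq.le
    _ = x^(-p) - (x+1)^(-p) := by rw [hid]; ring

lemma tail_le (K : ℕ) (hK : 1 ≤ K) (p : ℝ) (hp : 0 < p) :
    ∑' i : ℕ, ((K:ℝ) + i + 1) ^ (-(p+1)) ≤ (1/p) * (K:ℝ) ^ (-p) := by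
  have hK1 : (1:ℝ) ≤ (K:ℝ) := by exact_mod_cast hK
  apply Real.tsum_le_of_sum_range_le (fun n => by positivity)
  intro n
  have key : ∀ i:ℕ, ((K:ℝ)+i+1)^(-(p+1)) ≤
      (1/p) * (((K:ℝ)+i)^(-p) - ((K:ℝ)+(i+1:ℕ))^(-p)) := by
    intro i
    have hx : 1 ≤ (K:ℝ)+i := by
      have : (0:ℝ) ≤ (i:ℝ) := Nat.cast_nonneg i
      linarith
    have h := tail_inc ((K:ℝ)+i) p hx hp
    have hcast : ((K:ℝ)+(i+1:ℕ)) = (K:ℝ)+i+1 := by push_cast; ring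
    rw [hcast]
    calc ((K:ℝ)+i+1)^(-(p+1)) = (1/p)*(p*((K:ℝ)+i+1)^(-(p+1))) := by field_simp
      _ ≤ (1/p)*(((K:ℝ)+i)^(-p) - ((K:ℝ)+i+1)^(-p)) :=
          mul_le_mul_of_nonneg_left h (by positivity)
  calc ∑ i ∈ range n, ((K:ℝ)+i+1)^(-(p+1))
      ≤ ∑ i ∈ range n, (1/p) * (((K:ℝ)+i)^(-p) - ((K:ℝ)+(i+1:ℕ))^(-p)) :=
        Finset.sum_le_sum (fun i _ => key i)
    _ = (1/p) * ∑ i ∈ range n, ((fun j:ℕ => ((K:ℝ)+j)^(-p)) i - (fun j:ℕ => ((K:ℝ)+j)^(-p)) (i+1)) := by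
        rw [Finset.mul_sum]
    _ = (1/p) * (((K:ℝ)+(0:ℕ))^(-p) - ((K:ℝ)+(n:ℕ))^(-p)) := by
        rw [Finset.sum_range_sub' (fun j:ℕ => ((K:ℝ)+j)^(-p)) n]
    _ ≤ (1/p) * (K:ℝ)^(-p) := by
        have hpos : (0:ℝ) < ((K:ℝ)+(n:ℕ))^(-p) := by positivity
        have : ((K:ℝ)+(0:ℕ)) = (K:ℝ) := by push_cast; ring
        rw [this]
        apply mul_le_mul_of_nonneg_left _ (by positivity)
        linarith

lemma head_le (K : ℕ) (q : ℝ) (hq : 0 < q) :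
    ∑ i ∈ range K, ((i:ℝ)+1)^(q-1) ≤ (2/q) * ((K:ℝ)+1)^q := by
  have key : ∀ i:ℕ, ((i:ℝ)+1)^(q-1) ≤
      (2/q) * ((((i+1:ℕ):ℝ)+1)^q - (((i:ℕ):ℝ)+1)^q) := by
    intro i
    have hx : (1:ℝ) ≤ (i:ℝ)+1 := by
      have : (0:ℝ) ≤ (i:ℝ) := Nat.cast_nonneg i
      linarith
    have h := inc_low ((i:ℝ)+1) q hx hq
    have hcast : (((i+1:ℕ):ℝ)+1) = ((i:ℝ)+1)+1 := by push_cast; ring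
    rw [hcast]
    calc ((i:ℝ)+1)^(q-1) = (2/q)*((q/2)*((i:ℝ)+1)^(q-1)) := by field_simp
      _ ≤ (2/q)*((((i:ℝ)+1)+1)^q - ((i:ℝ)+1)^q) :=
          mul_le_mul_of_nonneg_left h (by positivity)
  calc ∑ i ∈ range K, ((i:ℝ)+1)^(q-1)
      ≤ ∑ i ∈ range K, (2/q) * ((fun j:ℕ => ((j:ℝ)+1)^q) (i+1) - (fun j:ℕ => ((j:ℝ)+1)^q) i) :=
        Finset.sum_le_sum (fun i _ => key i)
    _ = (2/q) * (((K:ℝ)+1)^q - (((0:ℕ):ℝ)+1)^q) := by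
        rw [← Finset.mul_sum, Finset.sum_range_sub (fun j:ℕ => ((j:ℝ)+1)^q) K]
    _ ≤ (2/q) * ((K:ℝ)+1)^q := by
        have : (((0:ℕ):ℝ)+1)^q = 1 := by norm_num
        rw [this]
        apply mul_le_mul_of_nonneg_left _ (by positivity)
        linarith

lemma head_ge (K : ℕ) (hK : 1 ≤ K) (q : ℝ) (hq : 0 < q) :
    (1 - 2^(-q)) / (q * Real.exp q) * (K:ℝ)^q ≤ ∑ i ∈ range K, ((i:ℝ)+1)^(q-1) := by
  have hK1 : (1:ℝ) ≤ (K:ℝ) := by exact_mod_cast hK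
  have key : ∀ i:ℕ, (1/(q * Real.exp q)) * ((((i+1:ℕ):ℝ)+1)^q - (((i:ℕ):ℝ)+1)^q)
      ≤ ((i:ℝ)+1)^(q-1) := by
    intro i
    have hx : (1:ℝ) ≤ (i:ℝ)+1 := by
      have : (0:ℝ) ≤ (i:ℝ) := Nat.cast_nonneg i
      linarith
    have h := inc_high ((i:ℝ)+1) q hx hq
    have hcast : (((i+1:ℕ):ℝ)+1) = ((i:ℝ)+1)+1 := by push_cast; ring
    rw [hcast]
    have hqe : (0:ℝ) < q * Real.exp q := by positivity
    calc (1/(q * Real.exp q)) * ((((i:ℝ)+1)+1)^q - ((i:ℝ)+1)^q)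
        ≤ (1/(q * Real.exp q)) * (q * Real.exp q * ((i:ℝ)+1)^(q-1)) :=
          mul_le_mul_of_nonneg_left h (by positivity)
      _ = ((i:ℝ)+1)^(q-1) := by field_simp
  have htel : ∑ i ∈ range K, (1/(q * Real.exp q)) *
      ((fun j:ℕ => ((j:ℝ)+1)^q) (i+1) - (fun j:ℕ => ((j:ℝ)+1)^q) i)
      = (1/(q * Real.exp q)) * (((K:ℝ)+1)^q - 1) := by
    rw [← Finset.mul_sum, Finset.sum_range_sub (fun j:ℕ => ((j:ℝ)+1)^q) K]
    norm_num
  have hstep : (1 - 2^(-q)) * (K:ℝ)^q ≤ ((K:ℝ)+1)^q - 1 := by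
    have h2K : (2:ℝ) ≤ (K:ℝ)+1 := by linarith
    have hKq : (K:ℝ)^q ≤ ((K:ℝ)+1)^q :=
      Real.rpow_le_rpow (by linarith) (by linarith) hq.le
    have hinv : ((K:ℝ)+1)^(-q) ≤ (2:ℝ)^(-q) :=
      Real.rpow_le_rpow_of_nonpos (by norm_num) h2K (by linarith)
    have hone : 1 ≤ ((K:ℝ)+1)^q * (2:ℝ)^(-q) := by
      have := mul_le_mul_of_nonneg_left hinv (le_of_lt (Real.rpow_pos_of_pos (by linarith : (0:ℝ) < (K:ℝ)+1) q))
      have hid : ((K:ℝ)+1)^q * ((K:ℝ)+1)^(-q) = 1 := by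
        rw [← Real.rpow_add (by linarith)]; norm_num
      linarith
    have h2le : (2:ℝ)^(-q) ≤ 1 :=
      Real.rpow_le_one_of_one_le_of_nonpos (by norm_num) (by linarith)
    nlinarith [mul_le_mul_of_nonneg_left hKq (by linarith : (0:ℝ) ≤ 1 - (2:ℝ)^(-q))]
  calc (1 - 2^(-q)) / (q * Real.exp q) * (K:ℝ)^q
      = (1/(q * Real.exp q)) * ((1 - 2^(-q)) * (K:ℝ)^q) := by ring
    _ ≤ (1/(q * Real.exp q)) * (((K:ℝ)+1)^q - 1) :=
        mul_le_mul_of_nonneg_left hstep (by positivity)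
    _ = ∑ i ∈ range K, (1/(q * Real.exp q)) *
        ((fun j:ℕ => ((j:ℝ)+1)^q) (i+1) - (fun j:ℕ => ((j:ℝ)+1)^q) i) := htel.symm
    _ ≤ ∑ i ∈ range K, ((i:ℝ)+1)^(q-1) := Finset.sum_le_sum (fun i _ => key i)

theorem stmt_7 (β c C s : ℝ) (hβ : 1 < β) (hc : 0 < c) (hcC : c ≤ C)
    (hs0 : 0 < s) (hs2 : s < 2)
    (ev : ℕ → ℝ)
    (hlow : ∀ i : ℕ, c * ((i + 1 : ℕ) : ℝ) ^ (-β) ≤ ev i)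
    (hhigh : ∀ i : ℕ, ev i ≤ C * ((i + 1 : ℕ) : ℝ) ^ (-β)) :
    ∃ c' C' : ℝ, 0 < c' ∧ 0 < C' ∧
      ∀ l : ℝ, l ∈ Set.Ioc (0 : ℝ) 1 →
        c' * l ^ s ≤ ∑' i : ℕ, (l / (ev i + l)) ^ 2 * ev i ^ s * ((i + 1 : ℕ) : ℝ)⁻¹ ∧
        ∑' i : ℕ, (l / (ev i + l)) ^ 2 * ev i ^ s * ((i + 1 : ℕ) : ℝ)⁻¹ ≤ C' * l ^ s := by
  have hβ0 : 0 < β := by linarith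
  have hC : 0 < C := lt_of_lt_of_le hc hcC
  have hq : 0 < β * (2 - s) := by nlinarith
  have hp : 0 < β * s := by nlinarith
  set q : ℝ := β * (2 - s) with hqdef
  set p : ℝ := β * s with hpdef
  have h2q : (0:ℝ) < 1 - 2^(-q) := by
    have := Real.rpow_lt_one_of_one_lt_of_neg (by norm_num : (1:ℝ) < 2)
      (by linarith : -q < 0)
    linarith
  refine ⟨c^s * ((1 - 2^(-q)) / (q * Real.exp q)) * 2^(-q) / (C+1)^2,
          c^(s-2) * (2/q) * 2^q + C^s * 2^p / p, ?_, ?_, ?_⟩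
  · have h1 : (0:ℝ) < c ^ s := Real.rpow_pos_of_pos hc s
    positivity
  · have h1 : (0:ℝ) < c ^ (s-2) := Real.rpow_pos_of_pos hc _
    have h2 : (0:ℝ) < C ^ s := Real.rpow_pos_of_pos hC s
    positivity
  rintro l ⟨hl0, hl1⟩
  -- basic facts
  have hmpos : ∀ i:ℕ, (0:ℝ) < ((i+1:ℕ):ℝ) := fun i => by exact_mod_cast Nat.succ_pos i
  have hncast : ∀ i:ℕ, ((i+1:ℕ):ℝ) = (i:ℝ)+1 := fun i => by push_cast; ring
  have hev0 : ∀ i, 0 < ev i := fun i =>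
    lt_of_lt_of_le (mul_pos hc (Real.rpow_pos_of_pos (hmpos i) (-β))) (hlow i)
  have hfrac1 : ∀ i, (l/(ev i + l))^2 ≤ 1 := by
    intro i
    have h1 : l/(ev i + l) ≤ 1 := by
      rw [div_le_one (by have := hev0 i; linarith)]
      have := hev0 i; linarith
    have h2 : 0 ≤ l/(ev i + l) := by
      have := hev0 i; positivity
    nlinarith
  have hF0 : ∀ i, 0 ≤ (l / (ev i + l)) ^ 2 * ev i ^ s * ((i + 1 : ℕ) : ℝ)⁻¹ := by
    intro i
    have h1 := hev0 i
    have h2 := hmpos i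
    positivity
  -- tail pointwise bound
  have htail : ∀ i, (l / (ev i + l)) ^ 2 * ev i ^ s * ((i + 1 : ℕ) : ℝ)⁻¹
      ≤ C^s * ((i+1:ℕ):ℝ)^(-(p+1)) := by
    intro i
    have hm := hmpos i
    have h1 : ev i ^ s ≤ C^s * ((i+1:ℕ):ℝ)^(-p) := by
      calc ev i ^ s ≤ (C * ((i+1:ℕ):ℝ)^(-β))^s :=
            Real.rpow_le_rpow (hev0 i).le (hhigh i) hs0.le
        _ = C^s * (((i+1:ℕ):ℝ)^(-β))^s := Real.mul_rpow hC.le (by positivity)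
        _ = C^s * ((i+1:ℕ):ℝ)^(-p) := by
            rw [← Real.rpow_mul hm.le]
            congr 1
            rw [hpdef]; ring
    calc (l / (ev i + l)) ^ 2 * ev i ^ s * ((i + 1 : ℕ) : ℝ)⁻¹
        ≤ 1 * (C^s * ((i+1:ℕ):ℝ)^(-p)) * ((i + 1 : ℕ) : ℝ)⁻¹ := by
          apply mul_le_mul_of_nonneg_right _ (inv_nonneg.2 hm.le)
          exact mul_le_mul (hfrac1 i) h1
            (Real.rpow_nonneg (hev0 i).le s) one_pos.le
      _ = C^s * ((i+1:ℕ):ℝ)^(-(p+1)) := by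
          rw [show -(p+1) = -p + (-1) by ring, Real.rpow_add hm, Real.rpow_neg_one]
          ring
  -- head pointwise upper bound
  have hhead : ∀ i, (l / (ev i + l)) ^ 2 * ev i ^ s * ((i + 1 : ℕ) : ℝ)⁻¹
      ≤ l^2 * c^(s-2) * ((i+1:ℕ):ℝ)^(q-1) := by
    intro i
    have hm := hmpos i
    have he := hev0 i
    have h1 : (l/(ev i + l))^2 ≤ (l/ev i)^2 := by
      have hle : l/(ev i + l) ≤ l/ev i :=
        div_le_div_of_nonneg_left hl0.le he (by linarith)
      have h0 : 0 ≤ l/(ev i + l) := by positivity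
      nlinarith
    have h2 : ev i ^ (s-2) ≤ c^(s-2) * ((i+1:ℕ):ℝ)^(q-1+1) := by
      have hb : (0:ℝ) < c * ((i+1:ℕ):ℝ)^(-β) :=
        mul_pos hc (Real.rpow_pos_of_pos hm (-β))
      calc ev i ^ (s-2) ≤ (c * ((i+1:ℕ):ℝ)^(-β))^(s-2) :=
            Real.rpow_le_rpow_of_nonpos hb (hlow i) (by linarith)
        _ = c^(s-2) * (((i+1:ℕ):ℝ)^(-β))^(s-2) := Real.mul_rpow hc.le (by positivity)
        _ = c^(s-2) * ((i+1:ℕ):ℝ)^(q-1+1) := by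
            rw [← Real.rpow_mul hm.le]
            congr 1
            rw [hqdef]; ring
    calc (l / (ev i + l)) ^ 2 * ev i ^ s * ((i + 1 : ℕ) : ℝ)⁻¹
        ≤ (l/ev i)^2 * ev i ^ s * ((i + 1 : ℕ) : ℝ)⁻¹ := by
          apply mul_le_mul_of_nonneg_right _ (inv_nonneg.2 hm.le)
          exact mul_le_mul_of_nonneg_right h1 (Real.rpow_nonneg he.le s)
      _ = l^2 * ev i ^ (s-2) * ((i + 1 : ℕ) : ℝ)⁻¹ := by
          have key : (l/ev i)^2 * ev i ^ s = l^2 * ev i ^(s-2) := by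
            rw [div_pow, Real.rpow_sub he, ← Real.rpow_natCast (ev i) 2]
            norm_num
            ring
          rw [key]
      _ ≤ l^2 * (c^(s-2) * ((i+1:ℕ):ℝ)^(q-1+1)) * ((i + 1 : ℕ) : ℝ)⁻¹ := by
          apply mul_le_mul_of_nonneg_right _ (inv_nonneg.2 hm.le)
          exact mul_le_mul_of_nonneg_left h2 (by positivity)
      _ = l^2 * c^(s-2) * ((i+1:ℕ):ℝ)^(q-1) := by
          have hmne : ((i+1:ℕ):ℝ) ≠ 0 := hm.ne'
          rw [Real.rpow_add hm, Real.rpow_one]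
          field_simp
  -- lower pointwise bound
  have hlowpt : ∀ i, l * ((i+1:ℕ):ℝ)^β ≤ 1 →
      l^2/(C+1)^2 * c^s * ((i+1:ℕ):ℝ)^(q-1) ≤
        (l / (ev i + l)) ^ 2 * ev i ^ s * ((i + 1 : ℕ) : ℝ)⁻¹ := by
    intro i hi
    have hm := hmpos i
    have he := hev0 i
    have hmb : (0:ℝ) < ((i+1:ℕ):ℝ)^(-β) := Real.rpow_pos_of_pos hm _
    have hmβ : (0:ℝ) < ((i+1:ℕ):ℝ)^β := Real.rpow_pos_of_pos hm _
    have hlm : l ≤ ((i+1:ℕ):ℝ)^(-β) := by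
      rw [Real.rpow_neg hm.le, ← one_div]
      rw [le_div_iff₀ hmβ]
      linarith
    have hsumle : ev i + l ≤ (C+1) * ((i+1:ℕ):ℝ)^(-β) := by
      have h := hhigh i
      nlinarith
    have hfr : l / ((C+1) * ((i+1:ℕ):ℝ)^(-β)) ≤ l/(ev i + l) :=
      div_le_div_of_nonneg_left hl0.le (by linarith) hsumle
    have hsq : (l/((C+1)*((i+1:ℕ):ℝ)^(-β)))^2 ≤ (l/(ev i+l))^2 :=
      pow_le_pow_left₀ (by positivity) hfr 2
    have hevs : c^s * ((i+1:ℕ):ℝ)^(-p) ≤ ev i ^ s := by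
      have hb : (0:ℝ) ≤ c * ((i+1:ℕ):ℝ)^(-β) := by positivity
      calc c^s * ((i+1:ℕ):ℝ)^(-p) = (c * ((i+1:ℕ):ℝ)^(-β))^s := by
            rw [Real.mul_rpow hc.le hmb.le, ← Real.rpow_mul hm.le]
            congr 2
            rw [hpdef]; ring
        _ ≤ ev i ^ s := Real.rpow_le_rpow hb (hlow i) hs0.le
    have e2 : ((i+1:ℕ):ℝ)^(q-1) = ((i+1:ℕ):ℝ)^(2*β) * ((i+1:ℕ):ℝ)^(-p) * ((i+1:ℕ):ℝ)⁻¹ := by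
      rw [← Real.rpow_neg_one ((i+1:ℕ):ℝ), ← Real.rpow_add hm, ← Real.rpow_add hm]
      congr 1
      rw [hqdef, hpdef]; ring
    have e3 : (l/((C+1)*((i+1:ℕ):ℝ)^(-β)))^2 = l^2/(C+1)^2 * ((i+1:ℕ):ℝ)^(2*β) := by
      rw [div_pow, mul_pow]
      rw [← Real.rpow_natCast (((i+1:ℕ):ℝ)^(-β)) 2, ← Real.rpow_mul hm.le]
      rw [show -β*((2:ℕ):ℝ) = -(2*β) by push_cast; ring]
      rw [Real.rpow_neg hm.le]
      have h1 : ((i+1:ℕ):ℝ)^(2*β) ≠ 0 := (Real.rpow_pos_of_pos hm _).ne'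
      have h2 : ((C:ℝ)+1)^2 ≠ 0 := by positivity
      field_simp
    calc l^2/(C+1)^2 * c^s * ((i+1:ℕ):ℝ)^(q-1)
        = (l/((C+1)*((i+1:ℕ):ℝ)^(-β)))^2 * (c^s * ((i+1:ℕ):ℝ)^(-p)) * ((i+1:ℕ):ℝ)⁻¹ := by
          rw [e3, e2]; ring
      _ ≤ (l/(ev i+l))^2 * (c^s * ((i+1:ℕ):ℝ)^(-p)) * ((i+1:ℕ):ℝ)⁻¹ := by
          apply mul_le_mul_of_nonneg_right _ (inv_nonneg.2 hm.le)
          exact mul_le_mul_of_nonneg_right hsq (by positivity)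
      _ ≤ (l/(ev i+l))^2 * ev i^s * ((i+1:ℕ):ℝ)⁻¹ := by
          apply mul_le_mul_of_nonneg_right _ (inv_nonneg.2 hm.le)
          exact mul_le_mul_of_nonneg_left hevs (by positivity)
  -- the threshold
  set X : ℝ := l ^ (-(1/β)) with hXdef
  have hX1 : (1:ℝ) ≤ X := by
    have h0 : (0:ℝ) < 1/β := by positivity
    have h := Real.rpow_le_rpow_of_exponent_ge hl0 hl1
      (by linarith : -(1/β) ≤ (0:ℝ))
    rw [Real.rpow_zero] at h
    exact h
  set K : ℕ := ⌊X⌋₊ with hKdef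
  have hK1 : 1 ≤ K := Nat.le_floor (by exact_mod_cast hX1)
  have hK1' : (1:ℝ) ≤ (K:ℝ) := by exact_mod_cast hK1
  have hKle : (K:ℝ) ≤ X := Nat.floor_le (by positivity)
  have hKge : X/2 ≤ (K:ℝ) := by
    rcases le_or_gt X 2 with h | h
    · linarith
    · have h2 : X - 1 < (K:ℝ) := Nat.sub_one_lt_floor X
      linarith
  have hbne : β ≠ 0 := hβ0.ne'
  have hXpow : ∀ r : ℝ, X ^ r = l ^ (-(1/β) * r) :=
    fun r => (Real.rpow_mul hl0.le _ r).symm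
  have hXq : X ^ q = l ^ (s-2) := by
    rw [hXpow]; congr 1; rw [hqdef]; field_simp; ring
  have hXp : X ^ (-p) = l ^ s := by
    rw [hXpow]; congr 1; rw [hpdef]; field_simp
  have hXβ : X ^ β = l⁻¹ := by
    rw [hXpow, show -(1/β)*β = -1 by field_simp, Real.rpow_neg_one]
  have hsmall : ∀ i ∈ Finset.range K, l * ((i+1:ℕ):ℝ)^β ≤ 1 := by
    intro i hi
    have hiK : i + 1 ≤ K := Nat.succ_le_of_lt (Finset.mem_range.1 hi)
    have h1 : ((i+1:ℕ):ℝ) ≤ X :=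
      le_trans (by exact_mod_cast hiK) hKle
    have h2 : ((i+1:ℕ):ℝ)^β ≤ X^β := Real.rpow_le_rpow (hmpos i).le h1 hβ0.le
    rw [hXβ] at h2
    calc l * ((i+1:ℕ):ℝ)^β ≤ l * l⁻¹ := mul_le_mul_of_nonneg_left h2 hl0.le
      _ = 1 := mul_inv_cancel₀ hl0.ne'
  -- summability
  have hsummaj : Summable (fun i:ℕ => C^s * ((i+1:ℕ):ℝ)^(-(p+1))) := by
    apply Summable.mul_left
    have h0 : Summable (fun n:ℕ => (n:ℝ)^(-(p+1))) :=
      Real.summable_nat_rpow.2 (by linarith)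
    exact (summable_nat_add_iff (f := fun n:ℕ => (n:ℝ)^(-(p+1))) 1).2 h0
  have hsumF : Summable (fun i:ℕ =>
      (l / (ev i + l)) ^ 2 * ev i ^ s * ((i + 1 : ℕ) : ℝ)⁻¹) :=
    Summable.of_nonneg_of_le hF0 htail hsummaj
  have hsplit := hsumF.sum_add_tsum_nat_add K
  have hl2 : l^(2:ℕ) = l^(2:ℝ) := by rw [← Real.rpow_natCast l 2]; norm_num
  have hls : l^(2:ℝ) * l^(s-2) = l^s := by
    rw [← Real.rpow_add hl0]; congr 1; ring
  -- head sum upper bound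
  have hheadsum : ∑ i ∈ Finset.range K,
      (l / (ev i + l)) ^ 2 * ev i ^ s * ((i + 1 : ℕ) : ℝ)⁻¹
      ≤ c^(s-2)*(2/q)*2^q * l^s := by
    have hcs2 : (0:ℝ) < c^(s-2) := Real.rpow_pos_of_pos hc _
    calc ∑ i ∈ Finset.range K, (l / (ev i + l)) ^ 2 * ev i ^ s * ((i + 1 : ℕ) : ℝ)⁻¹
        ≤ ∑ i ∈ Finset.range K, l^2*c^(s-2)*((i+1:ℕ):ℝ)^(q-1) :=
          Finset.sum_le_sum (fun i _ => hhead i)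
      _ = l^2*c^(s-2) * ∑ i ∈ Finset.range K, ((i:ℝ)+1)^(q-1) := by
          rw [Finset.mul_sum]
          exact Finset.sum_congr rfl (fun i _ => by rw [hncast i])
      _ ≤ l^2*c^(s-2) * ((2/q) * ((K:ℝ)+1)^q) := by
          apply mul_le_mul_of_nonneg_left (head_le K q hq) (by positivity)
      _ ≤ l^2*c^(s-2) * ((2/q) * (2^q * l^(s-2))) := by
          apply mul_le_mul_of_nonneg_left _ (by positivity)
          apply mul_le_mul_of_nonneg_left _ (by positivity)
          have h1 : (K:ℝ)+1 ≤ 2*X := by linarith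
          have h2 : ((K:ℝ)+1)^q ≤ (2*X)^q :=
            Real.rpow_le_rpow (by positivity) h1 hq.le
          rwa [Real.mul_rpow (by norm_num) (by positivity), hXq] at h2
      _ = c^(s-2)*(2/q)*2^q * l^s := by
          rw [hl2, ← hls]; ring
  -- tail sum upper bound
  have hcast2 : ∀ i:ℕ, ((i+K+1:ℕ):ℝ) = (K:ℝ)+i+1 := fun i => by push_cast; ring
  have htailsum : ∑' i:ℕ, (l / (ev (i+K) + l)) ^ 2 * ev (i+K) ^ s * (((i+K) + 1 : ℕ) : ℝ)⁻¹
      ≤ C^s*2^p/p * l^s := by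
    have hb1 : Summable (fun i:ℕ =>
        (l / (ev (i+K) + l)) ^ 2 * ev (i+K) ^ s * (((i+K) + 1 : ℕ) : ℝ)⁻¹) :=
      (summable_nat_add_iff (f := fun i:ℕ =>
        (l / (ev i + l)) ^ 2 * ev i ^ s * ((i + 1 : ℕ) : ℝ)⁻¹) K).2 hsumF
    have hmaj : Summable (fun i:ℕ => C^s * ((K:ℝ)+i+1)^(-(p+1))) := by
      apply Summable.mul_left
      have h0 : Summable (fun n:ℕ => ((n+1:ℕ):ℝ)^(-(p+1))) := by
        have h0' : Summable (fun n:ℕ => (n:ℝ)^(-(p+1))) :=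
          Real.summable_nat_rpow.2 (by linarith)
        exact (summable_nat_add_iff (f := fun n:ℕ => (n:ℝ)^(-(p+1))) 1).2 h0'
      have h1 := (summable_nat_add_iff (f := fun n:ℕ => ((n+1:ℕ):ℝ)^(-(p+1))) K).2 h0
      exact h1.congr (fun n => by rw [hcast2 n])
    calc ∑' i:ℕ, (l / (ev (i+K) + l)) ^ 2 * ev (i+K) ^ s * (((i+K) + 1 : ℕ) : ℝ)⁻¹
        ≤ ∑' i:ℕ, C^s * ((K:ℝ)+i+1)^(-(p+1)) := by
          apply Summable.tsum_le_tsum _ hb1 hmaj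
          intro i
          refine le_trans (htail (i+K)) (le_of_eq ?_)
          rw [hcast2 i]
      _ = C^s * ∑' i:ℕ, ((K:ℝ)+i+1)^(-(p+1)) := tsum_mul_left
      _ ≤ C^s * ((1/p) * (K:ℝ)^(-p)) := by
          apply mul_le_mul_of_nonneg_left (tail_le K hK1 p hp) (by positivity)
      _ ≤ C^s * ((1/p) * (2^p * l^s)) := by
          apply mul_le_mul_of_nonneg_left _ (by positivity)
          apply mul_le_mul_of_nonneg_left _ (by positivity)
          have hX2 : (0:ℝ) < X/2 := by linarith
          have h2 : (K:ℝ)^(-p) ≤ (X/2)^(-p) :=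
            Real.rpow_le_rpow_of_nonpos hX2 hKge (by linarith)
          have h3 : (X/2)^(-p) = 2^p * X^(-p) := by
            rw [Real.div_rpow (by positivity) (by norm_num),
                Real.rpow_neg (by norm_num : (0:ℝ) ≤ 2), div_eq_mul_inv, inv_inv]
            ring
          rwa [h3, hXp] at h2
      _ = C^s*2^p/p * l^s := by ring
  -- lower bound for the sum over range K
  have hlsum : ∑ i ∈ Finset.range K, (l^2/(C+1)^2 * c^s * ((i+1:ℕ):ℝ)^(q-1))
      ≤ ∑ i ∈ Finset.range K, (l / (ev i + l)) ^ 2 * ev i ^ s * ((i + 1 : ℕ) : ℝ)⁻¹ :=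
    Finset.sum_le_sum (fun i hi => hlowpt i (hsmall i hi))
  have hKq : 2^(-q) * l^s ≤ l^(2:ℕ) * (K:ℝ)^q := by
    have h1 : (X/2)^q ≤ (K:ℝ)^q := Real.rpow_le_rpow (by linarith) hKge hq.le
    have h2 : (X/2)^q = 2^(-q) * X^q := by
      rw [Real.div_rpow (by linarith) (by norm_num),
          Real.rpow_neg (by norm_num : (0:ℝ) ≤ 2), div_eq_mul_inv]
      ring
    rw [h2, hXq] at h1
    have h3 := mul_le_mul_of_nonneg_left h1 (le_of_lt (pow_pos hl0 2))
    have h4 : l^(2:ℕ) * (2^(-q) * l^(s-2)) = 2^(-q) * l^s := by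
      rw [hl2, ← hls]; ring
    linarith
  constructor
  · -- lower bound
    have hcst : (0:ℝ) ≤ c^s*((1 - 2^(-q))/(q*Real.exp q))/(C+1)^2 := by
      apply div_nonneg _ (by positivity)
      exact mul_nonneg (Real.rpow_nonneg hc.le s)
        (div_nonneg h2q.le (by positivity))
    have hstep2 := mul_le_mul_of_nonneg_left (head_ge K hK1 q hq)
      (by positivity : (0:ℝ) ≤ l^2/(C+1)^2*c^s)
    have hstep3 : l^2/(C+1)^2*c^s * ∑ i ∈ Finset.range K, ((i:ℝ)+1)^(q-1)
        = ∑ i ∈ Finset.range K, (l^2/(C+1)^2 * c^s * ((i+1:ℕ):ℝ)^(q-1)) := by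
      rw [Finset.mul_sum]
      exact Finset.sum_congr rfl (fun i _ => by rw [hncast i])
    have hstep5 : ∑ i ∈ Finset.range K,
        (l / (ev i + l)) ^ 2 * ev i ^ s * ((i + 1 : ℕ) : ℝ)⁻¹
        ≤ ∑' i:ℕ, (l / (ev i + l)) ^ 2 * ev i ^ s * ((i + 1 : ℕ) : ℝ)⁻¹ :=
      hsumF.sum_le_tsum (Finset.range K) (fun i _ => hF0 i)
    have hstep1 : c^s * ((1 - 2^(-q)) / (q * Real.exp q)) * 2^(-q)/(C+1)^2 * l^s
        ≤ l^2/(C+1)^2*c^s * ((1 - 2^(-q)) / (q * Real.exp q) * (K:ℝ)^q) := by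
      calc c^s * ((1 - 2^(-q)) / (q * Real.exp q)) * 2^(-q)/(C+1)^2 * l^s
          = (c^s*((1 - 2^(-q))/(q*Real.exp q))/(C+1)^2) * (2^(-q) * l^s) := by ring
        _ ≤ (c^s*((1 - 2^(-q))/(q*Real.exp q))/(C+1)^2) * (l^(2:ℕ) * (K:ℝ)^q) :=
            mul_le_mul_of_nonneg_left hKq hcst
        _ = l^2/(C+1)^2*c^s * ((1 - 2^(-q)) / (q * Real.exp q) * (K:ℝ)^q) := by ring
    linarith
  · -- upper bound
    rw [← hsplit]
    refine le_trans (add_le_add hheadsum htailsum) (le_of_eq ?_)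
    ring
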